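/- Let ε and X be random variables with P(ε ≤ 0 | X) = τ almost surely for τ ∈ (0,1), and let Z be another random variable with conditional distribution function F_{Z|X,ε}. Define W_{Θ,z} := (1{ε ≤ 0} − τ)·1{X ∈ Θ}·(1{Z ≤ z} − F_{Z|X,ε}(z | X, 0)). Then under the null hypothesis P(ε ≤ 0 | X, Z) = τ a.s., E[W_{Θ,z}] = 0, and Cov(W_{Θ₁,y}, W_{Θ₂,z}) = τ(1−τ) E[ 1{X ∈ Θ₁ ∩ Θ₂} · E[(1{Z ≤ y} − F_{Z|X,ε}(y|X,0))(1{Z ≤ z} − F_{Z|X,ε}(z|X,0)) | X, ε] ]. -/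
import Mathlib


open MeasureTheory Set

/-- The random variable
`W_{Θ,z} = (1{ε ≤ 0} − τ)·1{X ∈ Θ}·(1{Z ≤ z} − F_{Z|X,ε}(z|X,0))`,
where `Fc z x` stands for the conditional distribution function `F_{Z|X,ε}(z|x,0)`. -/
noncomputable def Wfun {Ωs : Type*} [MeasurableSpace Ωs] {d q : ℕ}
    (X : Ωs → Fin d → ℝ) (Z : Ωs → Fin q → ℝ) (e : Ωs → ℝ) (τ : ℝ)
    (Fc : (Fin q → ℝ) → (Fin d → ℝ) → ℝ)
    (Θ : Set (Fin d → ℝ)) (z : Fin q → ℝ) (ω : Ωs) : ℝ :=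
  ({ω' | e ω' ≤ 0}.indicator (fun _ => (1:ℝ)) ω - τ) *
    ((X ⁻¹' Θ).indicator (fun _ => (1:ℝ)) ω) *
    ({ω' | Z ω' ≤ z}.indicator (fun _ => (1:ℝ)) ω - Fc z (X ω))

lemma indOne_mem {α : Type*} (s : Set α) (x : α) :
    s.indicator (fun _ => (1:ℝ)) x = 0 ∨ s.indicator (fun _ => (1:ℝ)) x = 1 := by
  by_cases h : x ∈ s <;> simp [h]

lemma abs_indOne_le {α : Type*} (s : Set α) (x : α) :
    |s.indicator (fun _ => (1:ℝ)) x| ≤ 1 := by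
  rcases indOne_mem s x with h | h <;> rw [h] <;> norm_num

lemma abs_ind_sub_le {α : Type*} (s : Set α) (x : α) {F : ℝ} (hF : F ∈ Set.Icc (0:ℝ) 1) :
    |s.indicator (fun _ => (1:ℝ)) x - F| ≤ 1 := by
  rcases indOne_mem s x with h | h <;> rw [h, abs_le] <;>
    constructor <;> linarith [hF.1, hF.2]

theorem stmt15 {Ωs : Type*} [MeasurableSpace Ωs] (μ : Measure Ωs) [IsProbabilityMeasure μ]
    (d q : ℕ) (X : Ωs → Fin d → ℝ) (Z : Ωs → Fin q → ℝ) (e : Ωs → ℝ) (τ : ℝ)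
    (hτ : τ ∈ Set.Ioo (0:ℝ) 1)
    (hX : Measurable X) (hZ : Measurable Z) (he : Measurable e)
    (Fc : (Fin q → ℝ) → (Fin d → ℝ) → ℝ)
    (hFc_meas : ∀ z, Measurable (Fc z))
    (hFc_bdd : ∀ z x, Fc z x ∈ Set.Icc (0:ℝ) 1)
    -- the null hypothesis: `P(ε ≤ 0 | X, Z) = τ` almost surely
    (hnull : ∀ (Θ : Set (Fin d → ℝ)) (S : Set (Fin q → ℝ)),
      MeasurableSet Θ → MeasurableSet S →
      μ ({ω | e ω ≤ 0} ∩ X ⁻¹' Θ ∩ Z ⁻¹' S) = ENNReal.ofReal τ * μ (X ⁻¹' Θ ∩ Z ⁻¹' S))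
    (Θ Θ₁ Θ₂ : Set (Fin d → ℝ))
    (hΘ : MeasurableSet Θ) (hΘ₁ : MeasurableSet Θ₁) (hΘ₂ : MeasurableSet Θ₂)
    (y z : Fin q → ℝ) :
    (∫ ω, Wfun X Z e τ Fc Θ z ω ∂μ) = 0 ∧
      (∫ ω, Wfun X Z e τ Fc Θ₁ y ω * Wfun X Z e τ Fc Θ₂ z ω ∂μ) -
          (∫ ω, Wfun X Z e τ Fc Θ₁ y ω ∂μ) * (∫ ω, Wfun X Z e τ Fc Θ₂ z ω ∂μ) =
        τ * (1 - τ) *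
          ∫ ω, (X ⁻¹' (Θ₁ ∩ Θ₂)).indicator (fun _ => (1:ℝ)) ω *
            (({ω' | Z ω' ≤ y}.indicator (fun _ => (1:ℝ)) ω - Fc y (X ω)) *
             ({ω' | Z ω' ≤ z}.indicator (fun _ => (1:ℝ)) ω - Fc z (X ω))) ∂μ := by
  obtain ⟨hτ0, hτ1⟩ := hτ
  set A : Set Ωs := {ω | e ω ≤ 0} with hAdef
  have hAmeas : MeasurableSet A := measurableSet_le he measurable_const
  set T : Ωs → (Fin d → ℝ) × (Fin q → ℝ) := fun ω => (X ω, Z ω) with hTdef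
  have hTmeas : Measurable T := hX.prodMk hZ
  -- the two pushforward measures agree
  have hmeq : (μ.restrict A).map T = ENNReal.ofReal τ • μ.map T := by
    refine ext_of_generate_finite _ generateFrom_prod.symm isPiSystem_prod ?_ ?_
    · rintro s ⟨Θ', hΘ', S, hS, rfl⟩
      have hΘm : MeasurableSet Θ' := hΘ'
      have hSm : MeasurableSet S := hS
      have hprod : MeasurableSet (Θ' ×ˢ S) := hΘm.prod hSm
      rw [Measure.map_apply hTmeas hprod, Measure.smul_apply,
        Measure.map_apply hTmeas hprod, Measure.restrict_apply (hTmeas hprod)]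
      have hpre : T ⁻¹' (Θ' ×ˢ S) = X ⁻¹' Θ' ∩ Z ⁻¹' S := rfl
      rw [hpre, smul_eq_mul, ← hnull Θ' S hΘ' hS]
      congr 1
      ext ω
      simp only [mem_inter_iff, hAdef, mem_setOf_eq, mem_preimage]
      tauto
    · rw [Measure.map_apply hTmeas MeasurableSet.univ, Measure.smul_apply,
        Measure.map_apply hTmeas MeasurableSet.univ]
      simp only [preimage_univ, Measure.restrict_apply_univ, smul_eq_mul]
      have := hnull univ univ MeasurableSet.univ MeasurableSet.univ
      simpa using this
  -- key: ∫ 1_A · g(T ω) = τ ∫ g(T ω) for measurable g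
  have key : ∀ g : (Fin d → ℝ) × (Fin q → ℝ) → ℝ, Measurable g →
      ∫ ω, A.indicator (fun _ => (1:ℝ)) ω * g (T ω) ∂μ = τ * ∫ ω, g (T ω) ∂μ := by
    intro g hg
    have h1 : ∀ ω, A.indicator (fun _ => (1:ℝ)) ω * g (T ω)
        = A.indicator (fun ω => g (T ω)) ω := by
      intro ω; by_cases h : ω ∈ A <;> simp [h]
    simp_rw [h1]
    rw [integral_indicator hAmeas,
      ← integral_map hTmeas.aemeasurable hg.aestronglyMeasurable,
      hmeq, integral_smul_measure,
      integral_map hTmeas.aemeasurable hg.aestronglyMeasurable,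
      ENNReal.toReal_ofReal hτ0.le, smul_eq_mul]
  -- measurability of {v | v ≤ z'}
  have hle : ∀ z' : Fin q → ℝ, MeasurableSet {v : Fin q → ℝ | v ≤ z'} := by
    intro z'
    have : {v : Fin q → ℝ | v ≤ z'} = ⋂ i, {v | v i ≤ z' i} := by
      ext v; simp [Pi.le_def]
    rw [this]
    exact MeasurableSet.iInter fun i =>
      measurableSet_le (measurable_pi_apply i) measurable_const
  -- integrability of bounded measurable functions
  have hint : ∀ (f : Ωs → ℝ), Measurable f → (∀ ω, |f ω| ≤ 2) → Integrable f μ := by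
    intro f hf hb
    exact ⟨hf.aestronglyMeasurable, HasFiniteIntegral.of_bounded (C := 2)
      (Filter.Eventually.of_forall (by simpa [Real.norm_eq_abs] using hb))⟩
  -- the single-W lemma
  have hW0 : ∀ (Θ' : Set (Fin d → ℝ)), MeasurableSet Θ' → ∀ z' : Fin q → ℝ,
      ∫ ω, Wfun X Z e τ Fc Θ' z' ω ∂μ = 0 := by
    intro Θ' hΘ' z'
    set g : (Fin d → ℝ) × (Fin q → ℝ) → ℝ := fun p =>
      Θ'.indicator (fun _ => (1:ℝ)) p.1 *
        ({v | v ≤ z'}.indicator (fun _ => (1:ℝ)) p.2 - Fc z' p.1) with hgdef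
    have hg : Measurable g := by
      apply Measurable.mul
      · exact (measurable_const.indicator hΘ').comp measurable_fst
      · exact (((measurable_const.indicator (hle z')).comp measurable_snd)).sub
          ((hFc_meas z').comp measurable_fst)
    have hgb : ∀ p, |g p| ≤ 1 := by
      intro p
      rw [hgdef, abs_mul]
      have h1 := abs_indOne_le Θ' p.1
      have h2 := abs_ind_sub_le {v | v ≤ z'} p.2 (hFc_bdd z' p.1)
      nlinarith [abs_nonneg (Θ'.indicator (fun _ => (1:ℝ)) p.1)]
    have hident : ∀ ω, Wfun X Z e τ Fc Θ' z' ω =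
        A.indicator (fun _ => (1:ℝ)) ω * g (T ω) - τ * g (T ω) := by
      intro ω
      have h1 : (X ⁻¹' Θ').indicator (fun _ => (1:ℝ)) ω
          = Θ'.indicator (fun _ => (1:ℝ)) (X ω) := by
        by_cases h : X ω ∈ Θ' <;> simp [h]
      have h2 : {ω' | Z ω' ≤ z'}.indicator (fun _ => (1:ℝ)) ω
          = {v | v ≤ z'}.indicator (fun _ => (1:ℝ)) (Z ω) := by
        by_cases h : Z ω ≤ z' <;> simp [h]
      simp only [Wfun, hgdef, hTdef, hAdef, h1, h2]
      ring
    have hi1 : Integrable (fun ω => A.indicator (fun _ => (1:ℝ)) ω * g (T ω)) μ := by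
      refine hint _ ((measurable_const.indicator hAmeas).mul (hg.comp hTmeas)) ?_
      intro ω
      rw [abs_mul]
      nlinarith [abs_indOne_le A ω, hgb (T ω), abs_nonneg (A.indicator (fun _ => (1:ℝ)) ω)]
    have hi2 : Integrable (fun ω => τ * g (T ω)) μ := by
      refine hint _ (measurable_const.mul (hg.comp hTmeas)) ?_
      intro ω
      rw [abs_mul, abs_of_pos hτ0]
      nlinarith [hgb (T ω)]
    calc ∫ ω, Wfun X Z e τ Fc Θ' z' ω ∂μ
        = ∫ ω, (A.indicator (fun _ => (1:ℝ)) ω * g (T ω) - τ * g (T ω)) ∂μ := by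
          exact integral_congr_ae (Filter.Eventually.of_forall hident)
      _ = (∫ ω, A.indicator (fun _ => (1:ℝ)) ω * g (T ω) ∂μ)
            - ∫ ω, τ * g (T ω) ∂μ := integral_sub hi1 hi2
      _ = τ * (∫ ω, g (T ω) ∂μ) - τ * ∫ ω, g (T ω) ∂μ := by
          rw [key g hg, integral_const_mul]
      _ = 0 := sub_self _
  refine ⟨hW0 Θ hΘ z, ?_⟩
  rw [hW0 Θ₁ hΘ₁ y, hW0 Θ₂ hΘ₂ z, mul_zero, sub_zero]
  -- the product function G
  set G : (Fin d → ℝ) × (Fin q → ℝ) → ℝ := fun p =>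
    (Θ₁ ∩ Θ₂).indicator (fun _ => (1:ℝ)) p.1 *
      (({v | v ≤ y}.indicator (fun _ => (1:ℝ)) p.2 - Fc y p.1) *
       ({v | v ≤ z}.indicator (fun _ => (1:ℝ)) p.2 - Fc z p.1)) with hGdef
  have hG : Measurable G := by
    apply Measurable.mul
    · exact (measurable_const.indicator (hΘ₁.inter hΘ₂)).comp measurable_fst
    · exact ((((measurable_const.indicator (hle y)).comp measurable_snd)).sub
        ((hFc_meas y).comp measurable_fst)).mul
        ((((measurable_const.indicator (hle z)).comp measurable_snd)).sub
        ((hFc_meas z).comp measurable_fst))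
  have hGb : ∀ p, |G p| ≤ 1 := by
    intro p
    rw [hGdef, abs_mul, abs_mul]
    have h1 := abs_indOne_le (Θ₁ ∩ Θ₂) p.1
    have h2 := abs_ind_sub_le {v | v ≤ y} p.2 (hFc_bdd y p.1)
    have h3 := abs_ind_sub_le {v | v ≤ z} p.2 (hFc_bdd z p.1)
    have hbc : |{v | v ≤ y}.indicator (fun _ => (1:ℝ)) p.2 - Fc y p.1| *
        |{v | v ≤ z}.indicator (fun _ => (1:ℝ)) p.2 - Fc z p.1| ≤ 1 := by
      nlinarith [abs_nonneg ({v | v ≤ y}.indicator (fun _ => (1:ℝ)) p.2 - Fc y p.1),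
        abs_nonneg ({v | v ≤ z}.indicator (fun _ => (1:ℝ)) p.2 - Fc z p.1)]
    nlinarith [abs_nonneg ((Θ₁ ∩ Θ₂).indicator (fun _ => (1:ℝ)) p.1),
      mul_nonneg (abs_nonneg ({v | v ≤ y}.indicator (fun _ => (1:ℝ)) p.2 - Fc y p.1))
        (abs_nonneg ({v | v ≤ z}.indicator (fun _ => (1:ℝ)) p.2 - Fc z p.1))]
  -- pointwise identity for the product
  have hident2 : ∀ ω, Wfun X Z e τ Fc Θ₁ y ω * Wfun X Z e τ Fc Θ₂ z ω =
      (1 - 2*τ) * (A.indicator (fun _ => (1:ℝ)) ω * G (T ω)) + τ^2 * G (T ω) := by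
    intro ω
    have hbc : (Θ₁ ∩ Θ₂).indicator (fun _ => (1:ℝ)) (X ω)
        = (X ⁻¹' Θ₁).indicator (fun _ => (1:ℝ)) ω * (X ⁻¹' Θ₂).indicator (fun _ => (1:ℝ)) ω := by
      by_cases h1 : X ω ∈ Θ₁ <;> by_cases h2 : X ω ∈ Θ₂ <;>
        simp [Set.indicator_apply, mem_inter_iff, h1, h2]
    have h2y : {v | v ≤ y}.indicator (fun _ => (1:ℝ)) (Z ω)
        = {ω' | Z ω' ≤ y}.indicator (fun _ => (1:ℝ)) ω := by
      by_cases h : Z ω ≤ y <;> simp [h]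
    have h2z : {v | v ≤ z}.indicator (fun _ => (1:ℝ)) (Z ω)
        = {ω' | Z ω' ≤ z}.indicator (fun _ => (1:ℝ)) ω := by
      by_cases h : Z ω ≤ z <;> simp [h]
    simp only [Wfun, hGdef, hTdef, hAdef, hbc, h2y, h2z]
    rcases indOne_mem {ω' | e ω' ≤ 0} ω with h | h <;> rw [h] <;> ring
  have hi1 : Integrable (fun ω => A.indicator (fun _ => (1:ℝ)) ω * G (T ω)) μ := by
    refine hint _ ((measurable_const.indicator hAmeas).mul (hG.comp hTmeas)) ?_
    intro ω
    rw [abs_mul]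
    nlinarith [abs_indOne_le A ω, hGb (T ω), abs_nonneg (A.indicator (fun _ => (1:ℝ)) ω)]
  have hi1' : Integrable (fun ω => (1 - 2*τ) * (A.indicator (fun _ => (1:ℝ)) ω * G (T ω))) μ :=
    hi1.const_mul _
  have hi2 : Integrable (fun ω => τ^2 * G (T ω)) μ :=
    ((hint _ (hG.comp hTmeas) (fun ω => le_trans (hGb (T ω)) (by norm_num))).const_mul _)
  have hRHS : (∫ ω, (X ⁻¹' (Θ₁ ∩ Θ₂)).indicator (fun _ => (1:ℝ)) ω *
      (({ω' | Z ω' ≤ y}.indicator (fun _ => (1:ℝ)) ω - Fc y (X ω)) *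
       ({ω' | Z ω' ≤ z}.indicator (fun _ => (1:ℝ)) ω - Fc z (X ω))) ∂μ)
      = ∫ ω, G (T ω) ∂μ := by
    apply integral_congr_ae
    apply Filter.Eventually.of_forall
    intro ω
    have h1 : (X ⁻¹' (Θ₁ ∩ Θ₂)).indicator (fun _ => (1:ℝ)) ω
        = (Θ₁ ∩ Θ₂).indicator (fun _ => (1:ℝ)) (X ω) := by
      by_cases h1 : X ω ∈ Θ₁ <;> by_cases h2 : X ω ∈ Θ₂ <;>
        simp [Set.indicator_apply, mem_inter_iff, h1, h2]
    have h2y : {ω' | Z ω' ≤ y}.indicator (fun _ => (1:ℝ)) ω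
        = {v | v ≤ y}.indicator (fun _ => (1:ℝ)) (Z ω) := by
      by_cases h : Z ω ≤ y <;> simp [h]
    have h2z : {ω' | Z ω' ≤ z}.indicator (fun _ => (1:ℝ)) ω
        = {v | v ≤ z}.indicator (fun _ => (1:ℝ)) (Z ω) := by
      by_cases h : Z ω ≤ z <;> simp [h]
    simp only [hGdef, hTdef, h1, h2y, h2z]
  rw [hRHS]
  calc ∫ ω, Wfun X Z e τ Fc Θ₁ y ω * Wfun X Z e τ Fc Θ₂ z ω ∂μ
      = ∫ ω, ((1 - 2*τ) * (A.indicator (fun _ => (1:ℝ)) ω * G (T ω))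
          + τ^2 * G (T ω)) ∂μ :=
        integral_congr_ae (Filter.Eventually.of_forall hident2)
    _ = (1 - 2*τ) * (∫ ω, A.indicator (fun _ => (1:ℝ)) ω * G (T ω) ∂μ)
          + τ^2 * ∫ ω, G (T ω) ∂μ := by
        rw [integral_add hi1' hi2, integral_const_mul, integral_const_mul]
    _ = (1 - 2*τ) * (τ * ∫ ω, G (T ω) ∂μ) + τ^2 * ∫ ω, G (T ω) ∂μ := by
        rw [key G hG]
    _ = τ * (1 - τ) * ∫ ω, G (T ω) ∂μ := by ring
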